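/- τ_p^a is not idempotent if and only if there exists x ∈ A^G such that μ_p^a((s⁻¹·x)|_S) = p(s) for all s ∈ S. -/

import Mathlib

variable {G A : Type*}

def shift [Group G] (g : G) (x : G → A) : G → A := fun h => x (g⁻¹ * h)

def restrictPat (S : Finset G) (x : G → A) : S → A := fun s => x s

def muP [Group G] [DecidableEq A] (S : Finset G) (p : S → A) (a : A)
    (he : (1 : G) ∈ S) (z : S → A) : A :=
  if z = p then a else z ⟨1, he⟩

def tauP [Group G] [DecidableEq A] (S : Finset G) (p : S → A) (a : A)
    (he : (1 : G) ∈ S) (x : G → A) : G → A :=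
  fun g => muP S p a he (restrictPat S (shift g⁻¹ x))

lemma tauP_equivariant [Group G] [DecidableEq A] (S : Finset G) (p : S → A) (a : A)
    (he : (1 : G) ∈ S) (g : G) (x : G → A) :
    shift g (tauP S p a he x) = tauP S p a he (shift g x) := by
  funext h
  simp only [shift, tauP]
  congr 1
  funext s
  simp only [restrictPat, shift, mul_assoc, inv_inv]

theorem not_idempotent_iff [Group G] [Fintype A] [DecidableEq A]
    (hA : 2 ≤ Fintype.card A) (S : Finset G) (he : (1 : G) ∈ S)
    (p : S → A) (a : A) (ha : a ≠ p ⟨1, he⟩) :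
    ¬ (tauP S p a he ∘ tauP S p a he = tauP S p a he) ↔
      ∃ x : G → A, ∀ s : S, muP S p a he (restrictPat S (shift (s : G)⁻¹ x)) = p s := by
  constructor
  · intro h
    simp only [funext_iff, Function.comp_apply, not_forall] at h
    obtain ⟨x, g, hg⟩ := h
    -- τ(τx)(g) ≠ τ(x)(g)
    have key : restrictPat S (shift g⁻¹ (tauP S p a he x)) = p := by
      by_contra hne
      apply hg
      show muP S p a he (restrictPat S (shift g⁻¹ (tauP S p a he x))) = _
      rw [muP, if_neg hne]
      show tauP S p a he x (g⁻¹⁻¹ * 1) = _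
      rw [inv_inv, mul_one]
    rw [tauP_equivariant] at key
    refine ⟨shift g⁻¹ x, fun s => ?_⟩
    have := congrFun key s
    simpa [tauP, restrictPat] using this
  · rintro ⟨x, hx⟩ hcomp
    have h1 : tauP S p a he (tauP S p a he x) 1 = tauP S p a he x 1 :=
      congrFun (congrFun hcomp x) 1
    have hresP : restrictPat S (shift (1 : G)⁻¹ (tauP S p a he x)) = p := by
      funext s
      have := hx s
      simpa [restrictPat, shift, tauP, restrictPat] using this
    have h2 : tauP S p a he (tauP S p a he x) 1 = a := by
      show muP S p a he _ = a
      rw [hresP, muP, if_pos rfl]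
    have h3 : tauP S p a he x 1 = p ⟨1, he⟩ := by
      have := hx ⟨1, he⟩
      simpa [tauP] using this
    exact ha (h2 ▸ h1 ▸ h3 ▸ rfl : a = p ⟨1, he⟩)
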